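/- Rounding up distances to multiples of γ gives a 2-approximation of DTW: if μ'(a,b) = ⌈μ(a,b)/γ⌉ where μ(a,b) ≥ γ for all distinct a,b and μ(a,a)=0, then for all strings X, Y: DTW_μ(X,Y) ≤ γ · DTW_{μ'}(X,Y) ≤ 2 · DTW_μ(X,Y). -/

import Mathlib

open scoped ENNReal NNReal

def isStep (p q : ℕ × ℕ) : Prop :=
  (q.1 = p.1 + 1 ∧ q.2 = p.2) ∨ (q.1 = p.1 ∧ q.2 = p.2 + 1) ∨
    (q.1 = p.1 + 1 ∧ q.2 = p.2 + 1)

/-- A warping path for strings of lengths `m`, `n` (1-based grid). -/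
def IsWarpingPath (m n : ℕ) (π : List (ℕ × ℕ)) : Prop :=
  π ≠ [] ∧ π.head? = some (1, 1) ∧ π.getLast? = some (m, n) ∧ π.Chain' isStep

/-- Cost of a path: sum of letter distances over its vertices (1-based indexing). -/
noncomputable def pathCost {α : Type*} [Inhabited α] (d : α → α → ℝ≥0∞)
    (X Y : List α) (π : List (ℕ × ℕ)) : ℝ≥0∞ :=
  (π.map (fun p => d (X.getD (p.1 - 1) default) (Y.getD (p.2 - 1) default))).sum

open Classical in
/-- DTW distance: 0 if both strings empty, otherwise the infimum of warping path costs
(`⊤` when no warping path exists, e.g. exactly one string is empty). -/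
noncomputable def dtw {α : Type*} [Inhabited α] (d : α → α → ℝ≥0∞)
    (X Y : List α) : ℝ≥0∞ :=
  if X = [] ∧ Y = [] then 0
  else ⨅ π : {π : List (ℕ × ℕ) // IsWarpingPath X.length Y.length π},
    pathCost d X Y π.1

lemma dtw_mono {α : Type*} [Inhabited α] {d₁ d₂ : α → α → ℝ≥0∞}
    (h : ∀ a b, d₁ a b ≤ d₂ a b) (X Y : List α) : dtw d₁ X Y ≤ dtw d₂ X Y := by
  unfold dtw
  split_ifs with hc
  · exact le_rfl
  · refine iInf_mono fun π => ?_
    unfold pathCost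
    exact List.sum_le_sum fun p _ => h _ _

lemma dtw_smul {α : Type*} [Inhabited α] (c : ℝ≥0∞) (hc0 : c ≠ 0) (hct : c ≠ ⊤)
    (d : α → α → ℝ≥0∞) (X Y : List α) :
    dtw (fun a b => c * d a b) X Y = c * dtw d X Y := by
  unfold dtw
  split_ifs with hc
  · simp
  · rw [ENNReal.mul_iInf_of_ne hc0 hct]
    refine iInf_congr fun π => ?_
    unfold pathCost
    exact List.sum_map_mul_left _ _ _

theorem dtw_round_two_approx {α : Type*} [Inhabited α]
    (μ : α → α → ℝ≥0) (γ : ℝ≥0) (hγ : 0 < γ)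
    (hself : ∀ a, μ a a = 0) (hsep : ∀ a b, a ≠ b → γ ≤ μ a b) (X Y : List α) :
    dtw (fun a b => (μ a b : ℝ≥0∞)) X Y ≤
        (γ : ℝ≥0∞) * dtw (fun a b => ((⌈μ a b / γ⌉₊ : ℕ) : ℝ≥0∞)) X Y ∧
      (γ : ℝ≥0∞) * dtw (fun a b => ((⌈μ a b / γ⌉₊ : ℕ) : ℝ≥0∞)) X Y ≤
        2 * dtw (fun a b => (μ a b : ℝ≥0∞)) X Y := by
  have hγ0 : (γ : ℝ≥0∞) ≠ 0 := by exact_mod_cast hγ.ne'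
  have hγt : (γ : ℝ≥0∞) ≠ ⊤ := ENNReal.coe_ne_top
  rw [← dtw_smul (γ : ℝ≥0∞) hγ0 hγt]
  have key1 : ∀ a b : α, (μ a b : ℝ≥0∞) ≤ (γ : ℝ≥0∞) * (⌈μ a b / γ⌉₊ : ℕ) := by
    intro a b
    have h : μ a b ≤ γ * (⌈μ a b / γ⌉₊ : ℝ≥0) := by
      calc μ a b = γ * (μ a b / γ) := by rw [mul_div_cancel₀ _ hγ.ne']
        _ ≤ γ * (⌈μ a b / γ⌉₊ : ℝ≥0) := by
            exact mul_le_mul_right (Nat.le_ceil _) γ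
    exact_mod_cast h
  have key2 : ∀ a b : α, (γ : ℝ≥0∞) * (⌈μ a b / γ⌉₊ : ℕ) ≤ 2 * (μ a b : ℝ≥0∞) := by
    intro a b
    by_cases hab : a = b
    · subst hab; simp [hself a]
    · have hge : γ ≤ μ a b := hsep a b hab
      have h : γ * (⌈μ a b / γ⌉₊ : ℝ≥0) ≤ 2 * μ a b := by
        have hceil : (⌈μ a b / γ⌉₊ : ℝ≥0) ≤ μ a b / γ + 1 :=
          le_of_lt (Nat.ceil_lt_add_one zero_le)
        calc γ * (⌈μ a b / γ⌉₊ : ℝ≥0) ≤ γ * (μ a b / γ + 1) :=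
              mul_le_mul_right hceil γ
          _ = μ a b + γ := by rw [mul_add, mul_one, mul_div_cancel₀ _ hγ.ne']
          _ ≤ μ a b + μ a b := by exact add_le_add_right hge _
          _ = 2 * μ a b := (two_mul _).symm
      exact_mod_cast h
  constructor
  · exact dtw_mono key1 X Y
  · calc dtw (fun a b => (γ : ℝ≥0∞) * (⌈μ a b / γ⌉₊ : ℕ)) X Y
        ≤ dtw (fun a b => 2 * (μ a b : ℝ≥0∞)) X Y := dtw_mono key2 X Y
      _ = 2 * dtw (fun a b => (μ a b : ℝ≥0∞)) X Y := by
          exact dtw_smul 2 (by norm_num) (by norm_num) _ X Y
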